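/- For α > 4 and N₁, N₂ with √(Λ*(α/2)) < N₁ ≤ N₂, the unique Nash equilibrium of the Transformed Random Access Game lies in the interior of [0,N₁]×[0,N₂] and is the symmetric point (√(Λ*(α/2)), √(Λ*(α/2))). -/

import Mathlib

open Real Set

set_option linter.unusedVariables false


noncomputable def Ff (b c x : ℝ) : ℝ := x * Real.log (1 + x ^ (-b)) * Real.exp (-(c / x) - 1)

noncomputable def Uu (b x : ℝ) : ℝ :=
  b * x ^ (-b) / ((1 + x ^ (-b)) * Real.log (1 + x ^ (-b)))

noncomputable def Ψ (b c x : ℝ) : ℝ := 1 + c / x - Uu b x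

lemma t_pos {b x : ℝ} (hx : 0 < x) : 0 < x ^ (-b) := Real.rpow_pos_of_pos hx _

lemma g_pos {b x : ℝ} (hx : 0 < x) : 0 < Real.log (1 + x ^ (-b)) :=
  Real.log_pos (by linarith [t_pos (b := b) hx])

lemma V_mono : StrictMonoOn (fun t : ℝ => (1 + t) * Real.log (1 + t) / t) (Set.Ioi 0) := by
  have hderiv : ∀ t ∈ Set.Ioi (0:ℝ), HasDerivAt (fun t : ℝ => (1 + t) * Real.log (1 + t) / t)
      ((t - Real.log (1 + t)) / t ^ 2) t := by
    intro t ht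
    have ht : (0:ℝ) < t := ht
    have h1 : HasDerivAt (fun t : ℝ => 1 + t) 1 t := by
      simpa using (hasDerivAt_id t).const_add (1:ℝ)
    have h2 : HasDerivAt (fun t : ℝ => Real.log (1 + t)) (1 / (1 + t)) t := by
      simpa using h1.log (by linarith)
    have h3 := (h1.mul h2).div (hasDerivAt_id t) ht.ne'
    refine h3.congr_deriv ?_
    have h1t : (1:ℝ) + t ≠ 0 := by linarith
    simp only [id_eq, Pi.mul_apply]
    field_simp
    ring
  apply strictMonoOn_of_deriv_pos (convex_Ioi 0)
  · exact fun t ht => ((hderiv t ht).continuousAt).continuousWithinAt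
  · intro t ht
    rw [interior_Ioi] at ht
    rw [(hderiv t ht).deriv]
    have ht' : (0:ℝ) < t := ht
    have : Real.log (1 + t) < t := by
      have := Real.log_lt_sub_one_of_pos (x := 1 + t) (by linarith) (by linarith)
      linarith
    exact div_pos (by linarith) (by positivity)


lemma Uu_eq {b x : ℝ} (hx : 0 < x) :
    Uu b x = b / ((1 + x ^ (-b)) * Real.log (1 + x ^ (-b)) / x ^ (-b)) := by
  have ht := t_pos (b := b) hx
  have hg := g_pos (b := b) hx
  rw [Uu, div_div_eq_mul_div, mul_comm b (x ^ (-b)), mul_div_assoc]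

lemma Uu_mono {b : ℝ} (hb : 0 < b) : StrictMonoOn (Uu b) (Set.Ioi 0) := by
  intro x₁ h₁ x₂ h₂ h12
  have hx₁ : (0:ℝ) < x₁ := h₁
  have hx₂ : (0:ℝ) < x₂ := h₂
  have ht₁ := t_pos (b := b) hx₁
  have ht₂ := t_pos (b := b) hx₂
  -- x₂ ^ (-b) < x₁ ^ (-b)
  have htlt : x₂ ^ (-b) < x₁ ^ (-b) := by
    rw [Real.rpow_neg hx₁.le, Real.rpow_neg hx₂.le]
    exact inv_strictAnti₀ (Real.rpow_pos_of_pos hx₁ b) (Real.rpow_lt_rpow hx₁.le h12 hb)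
  have hV := V_mono (Set.mem_Ioi.mpr ht₂) (Set.mem_Ioi.mpr ht₁) htlt
  simp only at hV
  have hV₂ : 0 < (1 + x₂ ^ (-b)) * Real.log (1 + x₂ ^ (-b)) / x₂ ^ (-b) :=
    div_pos (mul_pos (by linarith) (g_pos hx₂)) ht₂
  rw [Uu_eq hx₁, Uu_eq hx₂]
  exact div_lt_div_of_pos_left hb hV₂ hV

lemma Ψ_anti' {b c x₁ x₂ : ℝ} (hb : 0 < b) (hc : 0 ≤ c) (h₁ : 0 < x₁) (h12 : x₁ < x₂) :
    Ψ b c x₂ < Ψ b c x₁ := by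
  simp only [Ψ]
  have hU := Uu_mono hb (Set.mem_Ioi.mpr h₁) (Set.mem_Ioi.mpr (h₁.trans h12)) h12
  have hdiv : c / x₂ ≤ c / x₁ := by gcongr
  linarith

lemma Uu_sqrt {α y : ℝ} (hα : 4 < α) (hy : 0 < y)
    (hL : (α / 2) / 2 = (1 + y ^ ((α / 2) / 2)) * Real.log (1 + y ^ (-((α / 2) / 2)))) :
    Uu (α/2) (Real.sqrt y) = 2 := by
  have hs : Real.sqrt y = y ^ ((1:ℝ)/2) := Real.sqrt_eq_rpow y
  have ht : (Real.sqrt y) ^ (-(α/2)) = y ^ (-((α / 2) / 2)) := by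
    rw [hs, ← Real.rpow_mul hy.le]
    congr 1; ring
  have hmul : y ^ ((α / 2) / 2) * y ^ (-((α / 2) / 2)) = 1 := by
    rw [← Real.rpow_add hy]; simp
  set a := (α/2)/2 with ha
  set T := y ^ (-((α / 2) / 2)) with hT
  have hTpos : 0 < T := Real.rpow_pos_of_pos hy _
  have hY : y ^ ((α / 2) / 2) = 1 / T := by
    rw [eq_div_iff hTpos.ne']; exact hmul
  have hkey : (1 + T) * Real.log (1 + T) = T * a := by
    have h1T : (1 + T) = T * (1 + 1/T) := by field_simp; ring
    calc (1 + T) * Real.log (1 + T) = T * ((1 + 1/T) * Real.log (1 + T)) := by rw [h1T]; ring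
    _ = T * ((1 + y ^ a) * Real.log (1 + T)) := by rw [hY]
    _ = T * a := by rw [← hL]
  rw [Uu, ht]
  rw [hkey]
  have haa : a ≠ 0 := by rw [ha]; intro h; nlinarith
  field_simp [ha]
  ring


lemma Ff_deriv {b c x : ℝ} (hx : 0 < x) :
    HasDerivAt (Ff b c)
      (Real.exp (-(c / x) - 1) * Real.log (1 + x ^ (-b)) * Ψ b c x) x := by
  have hxne := hx.ne'
  have ht : 0 < x ^ (-b) := t_pos hx
  have hden : (0:ℝ) < 1 + x ^ (-b) := by linarith
  have hg : 0 < Real.log (1 + x ^ (-b)) := g_pos hx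
  have h1 : HasDerivAt (fun z : ℝ => z ^ (-b)) (-b * x ^ (-b - 1)) x := by
    simpa using Real.hasDerivAt_rpow_const (p := -b) (Or.inl hxne)
  have h2 : HasDerivAt (fun z : ℝ => Real.log (1 + z ^ (-b)))
      (-b * x ^ (-b-1) / (1 + x ^ (-b))) x := by
    simpa using (h1.const_add 1).log hden.ne'
  have h3 : HasDerivAt (fun z : ℝ => -(c / z) - 1) (c / x ^ 2) x := by
    have h := ((hasDerivAt_inv hxne).const_mul c).neg.sub_const (1:ℝ)
    have heq : (fun z : ℝ => -(c / z) - 1) = fun z : ℝ => -(c * z⁻¹) - 1 := by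
      funext z; rw [div_eq_mul_inv]
    rw [heq]
    refine h.congr_deriv ?_
    rw [div_eq_mul_inv]; ring
  have h4 : HasDerivAt (fun z : ℝ => Real.exp (-(c / z) - 1))
      (Real.exp (-(c/x)-1) * (c / x ^ 2)) x := h3.exp
  have h5 : HasDerivAt (fun z : ℝ => z * Real.log (1 + z ^ (-b)))
      (Real.log (1 + x ^ (-b)) + x * (-b * x ^ (-b-1) / (1 + x ^ (-b)))) x := by
    have := (hasDerivAt_id x).mul h2
    refine this.congr_deriv ?_
    simp only [id_eq, one_mul]
  have h6 := h5.mul h4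
  have hxt : x * x ^ (-b-1) = x ^ (-b) := by
    rw [mul_comm, ← Real.rpow_add_one hxne]
    congr 1; ring
  refine h6.congr_deriv ?_
  have hrw : x * (-b * x ^ (-b-1) / (1 + x ^ (-b))) = -b * x ^ (-b) / (1 + x ^ (-b)) := by
    rw [← hxt]; ring
  rw [hrw, Ψ, Uu]
  field_simp
  ring


lemma Ff_pos {b c x : ℝ} (hx : 0 < x) : 0 < Ff b c x :=
  mul_pos (mul_pos hx (g_pos hx)) (Real.exp_pos _)

lemma Ff_zero (b c : ℝ) : Ff b c 0 = 0 := by simp [Ff]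

lemma Ff_lt {b c p q : ℝ} (hp : 0 < p) (hpq : p < q)
    (hψ : ∀ z ∈ Set.Ioo p q, 0 < Ψ b c z) : Ff b c p < Ff b c q := by
  have : StrictMonoOn (Ff b c) (Set.Icc p q) := by
    apply strictMonoOn_of_deriv_pos (convex_Icc p q)
    · intro z hz
      exact (Ff_deriv (lt_of_lt_of_le hp hz.1)).continuousAt.continuousWithinAt
    · intro z hz
      rw [interior_Icc] at hz
      have hz0 : 0 < z := hp.trans hz.1
      rw [(Ff_deriv hz0).deriv]
      exact mul_pos (mul_pos (Real.exp_pos _) (g_pos hz0)) (hψ z hz)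
  exact this (Set.left_mem_Icc.mpr hpq.le) (Set.right_mem_Icc.mpr hpq.le) hpq

lemma Ff_gt {b c p q : ℝ} (hp : 0 < p) (hpq : p < q)
    (hψ : ∀ z ∈ Set.Ioo p q, Ψ b c z < 0) : Ff b c q < Ff b c p := by
  have : StrictAntiOn (Ff b c) (Set.Icc p q) := by
    apply strictAntiOn_of_deriv_neg (convex_Icc p q)
    · intro z hz
      exact (Ff_deriv (lt_of_lt_of_le hp hz.1)).continuousAt.continuousWithinAt
    · intro z hz
      rw [interior_Icc] at hz
      have hz0 : 0 < z := hp.trans hz.1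
      rw [(Ff_deriv hz0).deriv]
      exact mul_neg_of_pos_of_neg (mul_pos (Real.exp_pos _) (g_pos hz0)) (hψ z hz)
  exact this (Set.left_mem_Icc.mpr hpq.le) (Set.right_mem_Icc.mpr hpq.le) hpq

lemma Ff_max {b s N : ℝ} (hb : 0 < b) (hs : 0 < s) (hsN : s ≤ N)
    (hΨ0 : Ψ b s s = 0) : IsMaxOn (Ff b s) (Set.Icc 0 N) s := by
  rw [isMaxOn_iff]
  intro x hx
  rcases eq_or_lt_of_le hx.1 with h0 | h0
  · rw [← h0, Ff_zero]; exact (Ff_pos hs).le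
  · rcases lt_trichotomy x s with hlt | heq | hgt
    · refine (Ff_lt h0 hlt ?_).le
      intro z hz
      have := Ψ_anti' hb hs.le (h0.trans hz.1) hz.2
      rw [hΨ0] at this; linarith [this]
    · rw [heq]
    · refine (Ff_gt hs hgt ?_).le
      intro z hz
      have := Ψ_anti' hb hs.le hs hz.1
      rw [hΨ0] at this; linarith [this]

lemma Ψ_cont {b c Λ : ℝ} (hΛ : 0 < Λ) : ContinuousAt (Ψ b c) Λ := by
  have ht : ContinuousAt (fun z : ℝ => z ^ (-b)) Λ :=
    Real.continuousAt_rpow_const Λ _ (Or.inl hΛ.ne')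
  have hden : (0:ℝ) < 1 + Λ ^ (-b) := by linarith [t_pos (b := b) hΛ]
  have hlog : ContinuousAt (fun z : ℝ => Real.log (1 + z ^ (-b))) Λ :=
    (continuousAt_const.add ht).log hden.ne'
  have hU : ContinuousAt (Uu b) Λ := by
    apply ContinuousAt.div (continuousAt_const.mul ht)
      ((continuousAt_const.add ht).mul hlog)
    exact (mul_pos hden (g_pos hΛ)).ne'
  exact ((continuousAt_const.add (continuousAt_const.div continuousAt_id hΛ.ne'))).sub hU

lemma kkt {b c N Λ : ℝ} (hb : 0 < b) (hc : 0 ≤ c) (hΛ : 0 < Λ) (hΛN : Λ ≤ N)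
    (hmax : IsMaxOn (Ff b c) (Set.Icc 0 N) Λ) :
    0 ≤ Ψ b c Λ ∧ (Λ < N → Ψ b c Λ = 0) := by
  rw [isMaxOn_iff] at hmax
  have hcont := Ψ_cont (b := b) (c := c) hΛ
  have hge : 0 ≤ Ψ b c Λ := by
    by_contra hneg
    push_neg at hneg
    have hev : ∀ᶠ z in nhds Λ, Ψ b c z < 0 := hcont.eventually_lt_const hneg
    have hev2 : ∀ᶠ z in nhds Λ, 0 < z := eventually_gt_nhds hΛ
    rcases Metric.eventually_nhds_iff.mp (hev.and hev2) with ⟨ε, hε, hball⟩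
    set p := Λ - min (ε/2) (Λ/2) with hp
    have hmin : 0 < min (ε/2) (Λ/2) := lt_min (by linarith) (by linarith)
    have hp0 : 0 < p := by
      have : min (ε/2) (Λ/2) ≤ Λ/2 := min_le_right _ _
      simp only [hp]; linarith
    have hpΛ : p < Λ := by simp only [hp]; linarith
    have hgt : Ff b c Λ < Ff b c p := by
      apply Ff_gt hp0 hpΛ
      intro z hz
      have hd : dist z Λ < ε := by
        rw [Real.dist_eq, abs_lt]
        have h1 : min (ε/2) (Λ/2) ≤ ε/2 := min_le_left _ _
        constructor <;> [skip; linarith [hz.2]]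
        have := hz.1; simp only [hp] at this; linarith
      exact (hball hd).1
    have := hmax p ⟨hp0.le, hpΛ.le.trans hΛN⟩
    linarith
  refine ⟨hge, fun hΛltN => ?_⟩
  rcases eq_or_lt_of_le hge with h | h
  · exact h.symm
  · exfalso
    have hev : ∀ᶠ z in nhds Λ, 0 < Ψ b c z := hcont.eventually_const_lt h
    rcases Metric.eventually_nhds_iff.mp hev with ⟨ε, hε, hball⟩
    set q := Λ + min (ε/2) ((N - Λ)/2) with hq
    have hmin : 0 < min (ε/2) ((N - Λ)/2) := lt_min (by linarith) (by linarith)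
    have hΛq : Λ < q := by simp only [hq]; linarith
    have hqN : q ≤ N := by
      have : min (ε/2) ((N - Λ)/2) ≤ (N - Λ)/2 := min_le_right _ _
      simp only [hq]; linarith
    have hlt : Ff b c Λ < Ff b c q := by
      apply Ff_lt hΛ hΛq
      intro z hz
      have hd : dist z Λ < ε := by
        rw [Real.dist_eq, abs_lt]
        have h1 : min (ε/2) ((N - Λ)/2) ≤ ε/2 := min_le_left _ _
        have := hz.2; simp only [hq] at this
        constructor <;> linarith [hz.1]
      exact hball hd
    have := hmax q ⟨by linarith, hqN⟩
    linarith


lemma key {b s M m NM Nm : ℝ} (hb : 0 < b) (hs : 0 < s) (hUs : Uu b s = 2)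
    (hM : 0 < M) (hm : 0 < m) (hmM : m ≤ M)
    (hsNM : s < NM) (hsNm : s < Nm)
    (hMN : M ≤ NM)
    (hKM : 0 ≤ Ψ b m M)
    (hEM : M < NM → Ψ b m M = 0) (hEm : m < Nm → Ψ b M m = 0) :
    M = s ∧ m = s := by
  -- step 1 : M ≤ s
  have hUM : Uu b M ≤ 2 := by
    have h1 : m / M ≤ 1 := (div_le_one hM).mpr hmM
    have := hKM
    rw [Ψ] at this
    linarith
  have hMs : M ≤ s := by
    by_contra hlt
    push_neg at hlt
    have := Uu_mono hb (Set.mem_Ioi.mpr hs) (Set.mem_Ioi.mpr hM) hlt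
    rw [hUs] at this; linarith
  have hEM' : Ψ b m M = 0 := hEM (lt_of_le_of_lt hMs hsNM)
  have hEm' : Ψ b M m = 0 := hEm (lt_of_le_of_lt (hmM.trans hMs) hsNm)
  rw [Ψ] at hEM' hEm'
  -- step 2 : m = M
  have hUmM : Uu b m ≤ Uu b M := by
    rcases eq_or_lt_of_le hmM with h | h
    · rw [h]
    · exact (Uu_mono hb (Set.mem_Ioi.mpr hm) (Set.mem_Ioi.mpr hM) h).le
  have hdiv : M / m ≤ m / M := by linarith
  have hMM : M * M ≤ m * m := by
    rw [div_le_div_iff₀ hm hM] at hdiv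
    linarith
  have hmM' : M = m := le_antisymm (by nlinarith) hmM
  subst hmM'
  have hself : M / M = 1 := div_self hM.ne'
  rw [hself] at hEM'
  have hUeq : Uu b M = Uu b s := by rw [hUs]; linarith
  have hMs' : M = s := (Uu_mono hb).injOn (Set.mem_Ioi.mpr hM) (Set.mem_Ioi.mpr hs) hUeq
  exact ⟨hMs', hMs'⟩


theorem unique_NE_partial_partial (α y N₁ N₂ : ℝ) (hα : 4 < α) (hy : 0 < y)
    (hLstar : (α / 2) / 2 = (1 + y ^ ((α / 2) / 2)) * Real.log (1 + y ^ (-((α / 2) / 2))))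
    (hN₁ : Real.sqrt y < N₁) (hN : N₁ ≤ N₂) :
    (0 < Real.sqrt y ∧ Real.sqrt y < N₁ ∧ Real.sqrt y < N₂) ∧
    (IsMaxOn (fun x : ℝ => x * Real.log (1 + x ^ (-(α / 2))) * Real.exp (-(Real.sqrt y / x) - 1))
        (Set.Icc 0 N₁) (Real.sqrt y) ∧
     IsMaxOn (fun x : ℝ => x * Real.log (1 + x ^ (-(α / 2))) * Real.exp (-(Real.sqrt y / x) - 1))
        (Set.Icc 0 N₂) (Real.sqrt y)) ∧
    (∀ Λ₁ Λ₂ : ℝ, Λ₁ ∈ Set.Icc 0 N₁ → Λ₂ ∈ Set.Icc 0 N₂ →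
      IsMaxOn (fun x : ℝ => x * Real.log (1 + x ^ (-(α / 2))) * Real.exp (-(Λ₂ / x) - 1))
        (Set.Icc 0 N₁) Λ₁ →
      IsMaxOn (fun x : ℝ => x * Real.log (1 + x ^ (-(α / 2))) * Real.exp (-(Λ₁ / x) - 1))
        (Set.Icc 0 N₂) Λ₂ →
      Λ₁ = Real.sqrt y ∧ Λ₂ = Real.sqrt y) := by
  set s := Real.sqrt y with hsdef
  have hs : 0 < s := Real.sqrt_pos.mpr hy
  have hb : 0 < α / 2 := by linarith
  have hsN₂ : s < N₂ := lt_of_lt_of_le hN₁ hN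
  have hUs : Uu (α/2) s = 2 := Uu_sqrt hα hy hLstar
  have hΨ0 : Ψ (α/2) s s = 0 := by
    rw [Ψ, hUs, div_self hs.ne']; ring
  refine ⟨⟨hs, hN₁, hsN₂⟩, ⟨?_, ?_⟩, ?_⟩
  · exact Ff_max hb hs hN₁.le hΨ0
  · exact Ff_max hb hs hsN₂.le hΨ0
  · intro Λ₁ Λ₂ h₁ h₂ hm₁ hm₂
    have hm₁' : IsMaxOn (Ff (α/2) Λ₂) (Set.Icc 0 N₁) Λ₁ := hm₁
    have hm₂' : IsMaxOn (Ff (α/2) Λ₁) (Set.Icc 0 N₂) Λ₂ := hm₂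
    -- positivity of Λ₁, Λ₂
    have hΛ₁ : 0 < Λ₁ := by
      rcases eq_or_lt_of_le h₁.1 with h0 | h0
      · exfalso
        have := (isMaxOn_iff.mp hm₁') s ⟨hs.le, hN₁.le⟩
        rw [← h0, Ff_zero] at this
        exact absurd this (not_le.mpr (Ff_pos hs))
      · exact h0
    have hΛ₂ : 0 < Λ₂ := by
      rcases eq_or_lt_of_le h₂.1 with h0 | h0
      · exfalso
        have := (isMaxOn_iff.mp hm₂') s ⟨hs.le, hsN₂.le⟩
        rw [← h0, Ff_zero] at this
        exact absurd this (not_le.mpr (Ff_pos hs))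
      · exact h0
    have K₁ := kkt hb hΛ₂.le hΛ₁ h₁.2 hm₁'
    have K₂ := kkt hb hΛ₁.le hΛ₂ h₂.2 hm₂'
    rcases le_total Λ₂ Λ₁ with hle | hle
    · exact key hb hs hUs hΛ₁ hΛ₂ hle hN₁ hsN₂ h₁.2 K₁.1 K₁.2 K₂.2
    · have := key hb hs hUs hΛ₂ hΛ₁ hle hsN₂ hN₁ h₂.2 K₂.1 K₂.2 K₁.2
      exact ⟨this.2, this.1⟩
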